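/- arXiv:2510.15321 — 6 statements merged into one kernel-verified Lean document; each statement's English description precedes it below -/
import Mathlib

section
/- Let (A, ≺) be a well-ordered set (or a well-order on a type A) and f : A → 𝒫(A) any function. Define B_a ⊆ A by strong ≺-induction: B_a = {a} if ⋃_{i≺a} B_i equals {x ∈ f(a) : x ⪯ a}, and B_a = ∅ otherwise. Then B = ⋃_{a∈A} B_a satisfies {x ∈ B : x ⪯ a} ≠ {x ∈ f(a) : x ⪯ a} for every a ∈ A; in particular B is not in the range of f. -/
open Classical in
/-- Inductive powerset theorem for a well-ordered type: the union `B` of the inductively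
defined sets `B_a` differs from each `f a` on the initial segment `⪯ a`, so `B` is not
in the range of `f`. -/
theorem powerset_wellorder_inductive
    {A : Type*} [LinearOrder A] [WellFoundedLT A]
    (f : A → Set A) (B : A → Set A)
    (hB : ∀ a : A, B a =
      if (⋃ i ∈ Set.Iio a, B i) = {x ∈ f a | x ≤ a} then {a} else ∅) :
    (∀ a : A, {x ∈ ⋃ b, B b | x ≤ a} ≠ {x ∈ f a | x ≤ a}) ∧
      (⋃ b, B b) ∉ Set.range f := by
  have hsub : ∀ i : A, B i ⊆ {i} := by
    intro i
    rw [hB i]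
    split <;> simp
  have key : ∀ a : A, {x ∈ ⋃ b, B b | x ≤ a} ≠ {x ∈ f a | x ≤ a} := by
    intro a h
    by_cases hc : (⋃ i ∈ Set.Iio a, B i) = {x ∈ f a | x ≤ a}
    · have ha : a ∈ B a := by rw [hB a, if_pos hc]; rfl
      have haL : a ∈ {x ∈ ⋃ b, B b | x ≤ a} :=
        ⟨Set.mem_iUnion.2 ⟨a, ha⟩, le_refl a⟩
      rw [h, ← hc] at haL
      simp only [Set.mem_iUnion, Set.mem_Iio] at haL
      obtain ⟨i, hia, hai⟩ := haL
      have : a = i := hsub i hai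
      exact absurd hia (by rw [← this]; exact lt_irrefl a)
    · apply hc
      rw [← h]
      ext x
      simp only [Set.mem_iUnion, Set.mem_setOf_eq, Set.mem_Iio]
      constructor
      · rintro ⟨i, hi, hx⟩
        have hxi : x = i := hsub i hx
        exact ⟨⟨i, hx⟩, le_of_lt (hxi ▸ hi)⟩
      · rintro ⟨⟨i, hx⟩, hle⟩
        have hxi : x = i := hsub i hx
        have hBa : B a = ∅ := by rw [hB a, if_neg hc]
        refine ⟨i, ?_, hx⟩
        rcases lt_or_eq_of_le hle with h1 | h2
        · rwa [hxi] at h1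
        · exfalso
          rw [← hxi, h2, hBa] at hx
          exact hx
  refine ⟨key, ?_⟩
  rintro ⟨a, ha⟩
  exact key a (by rw [ha])
end

section
/- Let f : A → 𝒫(A) and suppose (B, ≺) is a well-ordered subset of A satisfying (∗): f(b) = {x ∈ B : x ≺ b} for all b ∈ B, which is maximal with respect to the initial-segment extension order ⊑ among such pairs. Then B is not in the range of f. -/
/-- A well-ordered subset of `A`: a carrier set together with a relation that
well-orders it. -/
structure WOSub (A : Type*) where
  carrier : Set A
  r : A → A → Prop
  wo : IsWellOrder carrier (fun x y : carrier => r x y)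

/-- `ExtLE V W` (`V ⊑ W`): `V` is an initial segment of `W` (or equal to it),
with compatible orders. -/
def ExtLE {A : Type*} (V W : WOSub A) : Prop :=
  V.carrier ⊆ W.carrier ∧
  (∀ x ∈ V.carrier, ∀ y ∈ V.carrier, (V.r x y ↔ W.r x y)) ∧
  (∀ x ∈ V.carrier, ∀ y ∈ W.carrier, W.r y x → y ∈ V.carrier)

/-- Condition `(∗)`: `f b = B|_{≺ b}` for all `b ∈ B`. -/
def StarEq {A : Type*} (f : A → Set A) (B : WOSub A) : Prop :=
  ∀ b ∈ B.carrier, f b = {x ∈ B.carrier | B.r x b}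

/-- Condition `(⋆)`: `f b ⊆ B|_{≺ b}` for all `b ∈ B`. -/
def StarSub {A : Type*} (f : A → Set A) (B : WOSub A) : Prop :=
  ∀ b ∈ B.carrier, f b ⊆ {x ∈ B.carrier | B.r x b}

theorem maximal_star_not_in_range
    {A : Type*} (f : A → Set A) (B : WOSub A)
    (hstar : StarEq f B)
    (hmax : ∀ B' : WOSub A, ExtLE B B' → StarEq f B' → B'.carrier = B.carrier) :
    B.carrier ∉ Set.range f := by
  rintro ⟨a, ha⟩
  have haB : a ∉ B.carrier := by
    intro h
    have h1 : a ∈ f a := by rw [ha]; exact h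
    rw [hstar a h] at h1
    exact B.wo.toIsWellFounded.wf.asymmetric
      (a := (⟨a, h⟩ : B.carrier)) (b := ⟨a, h⟩) h1.2 h1.2
  -- extended relation
  set r' : A → A → Prop := fun x y => x ∈ B.carrier ∧ (B.r x y ∧ y ∈ B.carrier ∨ y = a)
    with hr'
  set C : Set A := insert a B.carrier with hC
  have hwf : WellFounded (fun x y : C => r' x y) := by
    constructor
    rintro ⟨x, hx⟩
    have key : ∀ b : B.carrier, ∀ h : (b : A) ∈ C,
        Acc (fun x y : C => r' x y) ⟨b, h⟩ := by
      intro b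
      refine B.wo.toIsWellFounded.wf.induction
        (C := fun b => ∀ h : (b : A) ∈ C, Acc (fun x y : C => r' x y) ⟨b, h⟩) b ?_
      intro b ih h
      constructor
      rintro ⟨y, hy⟩ ⟨hyB, hcase⟩
      rcases hcase with ⟨hr, hbB⟩ | hba
      · exact ih ⟨y, hyB⟩ hr _
      · exact absurd (hba ▸ b.2) haB
    rcases hx with rfl | hxB
    · constructor
      rintro ⟨y, hy⟩ ⟨hyB, _⟩
      exact key ⟨y, hyB⟩ hy
    · exact key ⟨x, hxB⟩ _
  have hwo : IsWellOrder C (fun x y : C => r' x y) := by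
    haveI htri : IsTrichotomous C (fun x y : C => r' x y) := by
      constructor
      rintro ⟨x, hx⟩ ⟨y, hy⟩
      suffices h : (fun x y : C => r' x y) ⟨x, hx⟩ ⟨y, hy⟩ ∨ (⟨x, hx⟩ : C) = ⟨y, hy⟩ ∨
          (fun x y : C => r' x y) ⟨y, hy⟩ ⟨x, hx⟩ by
        exact fun h1 h2 => h.elim (absurd · h1) (·.elim id (absurd · h2))
      rcases hx with rfl | hxB
      · rcases hy with rfl | hyB
        · exact Or.inr (Or.inl rfl)
        · exact Or.inr (Or.inr ⟨hyB, Or.inr rfl⟩)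
      · rcases hy with rfl | hyB
        · exact Or.inl ⟨hxB, Or.inr rfl⟩
        · rcases @trichotomous_of _ (fun x y : B.carrier => B.r x y) B.wo.toTrichotomous ⟨x, hxB⟩ ⟨y, hyB⟩ with h | h | h
          · exact Or.inl ⟨hxB, Or.inl ⟨h, hyB⟩⟩
          · exact Or.inr (Or.inl (Subtype.ext (congrArg (Subtype.val : B.carrier → A) h)))
          · exact Or.inr (Or.inr ⟨hyB, Or.inl ⟨h, hxB⟩⟩)
    haveI htr : IsTrans C (fun x y : C => r' x y) := by
      constructor
      rintro ⟨x, hx⟩ ⟨y, hy⟩ ⟨z, hz⟩ ⟨hxB, hc1⟩ ⟨hyB, hc2⟩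
      refine ⟨hxB, ?_⟩
      rcases hc2 with ⟨hr2, hzB⟩ | hza
      · rcases hc1 with ⟨hr1, _⟩ | hya
        · exact Or.inl ⟨@IsTrans.trans _ (fun x y : B.carrier => B.r x y) (by haveI := B.wo; infer_instance) ⟨x, hxB⟩ ⟨y, hyB⟩ ⟨z, hzB⟩ hr1 hr2, hzB⟩
        · exact absurd (hya ▸ hyB) haB
      · exact Or.inr hza
    haveI : IsWellFounded C (fun x y : C => r' x y) := ⟨hwf⟩
    exact ⟨⟩
  set B' : WOSub A := ⟨C, r', hwo⟩ with hB'
  have hext : ExtLE B B' := by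
    refine ⟨Set.subset_insert _ _, ?_, ?_⟩
    · intro x hx y hy
      constructor
      · intro h; exact ⟨hx, Or.inl ⟨h, hy⟩⟩
      · rintro ⟨_, ⟨h, _⟩ | hya⟩
        · exact h
        · exact absurd (hya ▸ hy) haB
    · rintro x hx y hy ⟨hyB, _⟩
      exact hyB
  have hstar' : StarEq f B' := by
    intro b hb
    rcases hb with rfl | hbB
    · rw [ha]
      ext x
      simp only [Set.mem_setOf_eq]
      constructor
      · intro hx; exact ⟨Or.inr hx, hx, Or.inr rfl⟩
      · rintro ⟨_, hxB, _⟩; exact hxB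
    · rw [hstar b hbB]
      ext x
      simp only [Set.mem_setOf_eq]
      constructor
      · rintro ⟨hxB, hr⟩
        exact ⟨Or.inr hxB, hxB, Or.inl ⟨hr, hbB⟩⟩
      · rintro ⟨_, hxB, ⟨hr, _⟩ | hba⟩
        · exact ⟨hxB, hr⟩
        · exact absurd (hba ▸ hbB) haB
  have := hmax B' hext hstar'
  have : a ∈ B.carrier := this ▸ Set.mem_insert a B.carrier
  exact haB this
end

section
/- Let f : A → 𝒫(A) and suppose (B, ≺) is a ⊑-maximal well-ordered subset of A satisfying the relaxed condition (⋆): f(b) ⊆ {x ∈ B : x ≺ b} for all b ∈ B. Then B is not in the range of f. -/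
theorem maximal_starSub_not_in_range
    {A : Type*} (f : A → Set A) (B : WOSub A)
    (hstar : StarSub f B)
    (hmax : ∀ B' : WOSub A, ExtLE B B' → StarSub f B' → B'.carrier = B.carrier) :
    B.carrier ∉ Set.range f := by
  rintro ⟨a, ha⟩
  by_cases haB : a ∈ B.carrier
  · have hafa : a ∈ f a := by rw [ha]; exact haB
    have h := hstar a haB hafa
    exact B.wo.toIsWellFounded.wf.isIrrefl.irrefl ⟨a, haB⟩ h.2
  · -- extend B by putting a on top
    set r' : A → A → Prop :=
      fun x y => (x ∈ B.carrier ∧ y ∈ B.carrier ∧ B.r x y) ∨ (x ∈ B.carrier ∧ y = a)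
      with hr'
    set S : Set A := insert a B.carrier with hS
    have hwo : IsWellOrder S (fun x y : S => r' x y) := by
      haveI := B.wo
      refine (fun (ht : ∀ x y : S, r' x y ∨ x = y ∨ r' y x) (_ : ∀ x y z : S, r' x y → r' y z → r' x z)
          (hw : WellFounded (fun x y : S => r' x y)) =>
          { trichotomous := fun x y h1 h2 => (ht x y).elim (fun h => absurd h h1) (fun h => h.resolve_right h2),
            toIsWellFounded := ⟨hw⟩ }) ?_ ?_ ?_
      · 
        rintro ⟨x, hx⟩ ⟨y, hy⟩
        rcases hx with hx | hx
        · rcases hy with hy | hy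
          · right; left; exact Subtype.ext (hx.trans hy.symm)
          · right; right; exact Or.inr ⟨hy, hx⟩
        · rcases hy with hy | hy
          · left; exact Or.inr ⟨hx, hy⟩
          · rcases trichotomous_of (fun x y : B.carrier => B.r x y) ⟨x, hx⟩ ⟨y, hy⟩ with h | h | h
            · left; exact Or.inl ⟨hx, hy, h⟩
            · right; left
              have hxy : x = y := by injection h
              exact Subtype.ext hxy
            · right; right; exact Or.inl ⟨hy, hx, h⟩
      · rintro ⟨x, hx⟩ ⟨y, hy⟩ ⟨z, hz⟩ hxy hyz
        rcases hxy with ⟨hx', hy', hxy⟩ | ⟨hx', hy'⟩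
        · rcases hyz with ⟨_, hz', hyz⟩ | ⟨_, hz'⟩
          · exact Or.inl ⟨hx', hz', IsTrans.trans (r := fun x y : B.carrier => B.r x y) ⟨x, hx'⟩ ⟨y, hy'⟩ ⟨z, hz'⟩ hxy hyz⟩
          · exact Or.inr ⟨hx', hz'⟩
        · rcases hyz with ⟨hy'', _, _⟩ | ⟨hy'', _⟩ <;> exact absurd (hy' ▸ hy'') haB
      · have key : ∀ x : B.carrier, ∀ hx : (x : A) ∈ S, Acc (fun x y : S => r' x y) ⟨x, hx⟩ := by
          intro x
          induction x using B.wo.toIsWellFounded.wf.induction with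
          | _ x ih =>
            intro hx
            constructor
            rintro ⟨y, hy⟩ hyx
            rcases hyx with ⟨hy', hx', hyx⟩ | ⟨hy', hx'⟩
            · exact ih ⟨y, hy'⟩ hyx hy
            · exact absurd (hx' ▸ x.2) haB
        constructor
        rintro ⟨x, hx⟩
        rcases hx with hx | hx
        · constructor
          rintro ⟨y, hy⟩ hyx
          rcases hyx with ⟨hy', hx', _⟩ | ⟨hy', _⟩
          · exact absurd (hx ▸ hx') haB
          · exact key ⟨y, hy'⟩ hy
        · exact key ⟨x, hx⟩ (Or.inr hx)
    set B' : WOSub A := ⟨S, r', hwo⟩ with hB'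
    have hext : ExtLE B B' := by
      refine ⟨fun x hx => Or.inr hx, ?_, ?_⟩
      · intro x hx y hy
        constructor
        · intro h; exact Or.inl ⟨hx, hy, h⟩
        · rintro (⟨_, _, h⟩ | ⟨_, hya⟩)
          · exact h
          · exact absurd (hya ▸ hy) haB
      · rintro x hx y hy (⟨hy', _, _⟩ | ⟨hy', _⟩) <;> exact hy'
    have hstar' : StarSub f B' := by
      rintro b (hb | hb)
      · subst hb
        intro x hx
        rw [ha] at hx
        exact ⟨Or.inr hx, Or.inr ⟨hx, rfl⟩⟩
      · intro x hx
        have h := hstar b hb hx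
        exact ⟨Or.inr h.1, Or.inl ⟨h.1, hb, h.2⟩⟩
    have := hmax B' hext hstar'
    have : a ∈ B.carrier := this ▸ (Or.inl rfl : a ∈ S)
    exact haB this
end

section
/- For a function f : A → 𝒫(A), define sets B_γ ⊆ A by transfinite induction over all ordinals γ: B_γ = {x ∈ A : f(x) ⊆ ⋃_{i<γ} B_i}. Then the sets B_γ stabilize (there is an ordinal γ₀ with B_γ = B_{γ₀} in the sense that ⋃_{i<γ} B_i is constant for γ ≥ γ₀), and the set 𝓑 = ⋃_γ B_γ is not in the range of f. -/
universe u

/-- Transfinite iteration `B_γ = {x | f x ⊆ ⋃_{i<γ} B_i}` stabilizes, and its union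
is not in the range of `f`. -/
theorem transfinite_iteration_not_in_range
    {A : Type u} (f : A → Set A) (B : Ordinal.{u} → Set A)
    (hB : ∀ γ : Ordinal.{u}, B γ = {x : A | f x ⊆ ⋃ i ∈ Set.Iio γ, B i}) :
    (∃ γ₀ : Ordinal.{u}, ∀ γ : Ordinal.{u}, γ₀ ≤ γ →
        (⋃ i ∈ Set.Iio γ, B i) = ⋃ i ∈ Set.Iio γ₀, B i) ∧
      (⋃ γ : Ordinal.{u}, B γ) ∉ Set.range f := by
  classical
  set C : Ordinal.{u} → Set A := fun γ => ⋃ i ∈ Set.Iio γ, B i with hC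
  have hCmono : ∀ {γ δ : Ordinal.{u}}, γ ≤ δ → C γ ⊆ C δ := by
    intro γ δ h
    exact Set.biUnion_subset_biUnion_left (fun i hi => lt_of_lt_of_le hi h)
  have hBC : ∀ γ, B γ = {x : A | f x ⊆ C γ} := hB
  have hBmono : ∀ {γ δ : Ordinal.{u}}, γ ≤ δ → B γ ⊆ B δ := by
    intro γ δ h x hx
    rw [hBC] at hx ⊢
    exact hx.trans (hCmono h)
  have hBsubC : ∀ {γ δ : Ordinal.{u}}, γ < δ → B γ ⊆ C δ := by
    intro γ δ h x hx
    exact Set.mem_biUnion h hx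
  -- C is not injective
  have hninj : ¬ Function.Injective C := by
    intro hinj
    exact not_small_ordinal.{u, u} (small_of_injective hinj)
  simp only [Function.Injective] at hninj
  push_neg at hninj
  obtain ⟨a, b, hab, hne⟩ := hninj
  -- wlog α < β
  obtain ⟨α, β, hαβ, hCeq⟩ : ∃ α β : Ordinal.{u}, α < β ∧ C α = C β := by
    rcases hne.lt_or_gt with h | h
    · exact ⟨a, b, h, hab⟩
    · exact ⟨b, a, h, hab.symm⟩
  -- B α ⊆ C α
  have hBαCα : B α ⊆ C α := by
    have h1 : B α ⊆ C β := hBsubC hαβ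
    rwa [← hCeq] at h1
  -- C stabilizes at α
  have hstab : ∀ γ, α ≤ γ → C γ = C α := by
    intro γ
    induction γ using Ordinal.induction with
    | h γ IH =>
      intro hαγ
      apply Set.Subset.antisymm _ (hCmono hαγ)
      intro x hx
      obtain ⟨i, hi, hxi⟩ := Set.mem_iUnion₂.mp hx
      rcases lt_or_ge i α with h | h
      · exact Set.mem_biUnion h hxi
      · have hCi : C i = C α := IH i hi h
        rw [hBC] at hxi
        rw [hCi] at hxi
        exact hBαCα (by rw [hBC]; exact hxi)
  refine ⟨⟨α, hstab⟩, ?_⟩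
  -- B stabilizes too: for γ ≥ α, B γ = B α
  have hBstab : ∀ γ, α ≤ γ → B γ = B α := by
    intro γ h
    rw [hBC, hBC, hstab γ h]
  -- the full union equals B α, which equals C α
  have hBαeq : B α = C α := by
    apply Set.Subset.antisymm hBαCα
    intro x hx
    obtain ⟨i, hi, hxi⟩ := Set.mem_iUnion₂.mp hx
    exact hBmono hi.le hxi
  have hUnion : (⋃ γ : Ordinal.{u}, B γ) = C α := by
    apply Set.Subset.antisymm
    · intro x hx
      obtain ⟨γ, hγ⟩ := Set.mem_iUnion.mp hx
      rcases le_or_gt γ α with h | h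
      · rw [← hBαeq]; exact hBmono h hγ
      · rw [← hBαeq, ← hBstab γ h.le]; exact hγ
    · intro x hx
      exact Set.mem_iUnion.mpr ⟨α, hBαeq ▸ hx⟩
  rintro ⟨a, ha⟩
  rw [hUnion] at ha
  -- a ∈ C α since f a = C α ⊆ C α
  have haB : a ∈ B α := by rw [hBC]; exact ha.le
  -- take the least γ with a ∈ B γ
  set S : Set Ordinal.{u} := {γ | a ∈ B γ} with hS
  have hSne : S.Nonempty := ⟨α, haB⟩
  set γm := Ordinal.lt_wf.min S hSne with hγm
  have hmem : a ∈ B γm := Ordinal.lt_wf.min_mem S hSne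
  have hfa : f a ⊆ C γm := by rw [hBC] at hmem; exact hmem
  have haC : a ∈ C γm := hfa (by rw [ha]; exact hBαCα haB)
  obtain ⟨i, hi, hxi⟩ := Set.mem_iUnion₂.mp haC
  exact Ordinal.lt_wf.not_lt_min S hxi hi
end

section
/- For any function f : A → 𝒫(A), the set 𝓓_∞ = {a ∈ A : there is no infinite sequence (x_i)_{i≥1} in A with x_1 ∈ f(a) and x_{i+1} ∈ f(x_i) for all i} is not in the range of f. -/
/-- `𝓓_∞`: the set of points from which no infinite `f`-descending chain starts. -/
def Dinf {A : Type*} (f : A → Set A) : Set A :=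
  {a : A | ¬ ∃ x : ℕ → A, x 0 ∈ f a ∧ ∀ i : ℕ, x (i + 1) ∈ f (x i)}

theorem Dinf_not_in_range {A : Type*} (f : A → Set A) :
    Dinf f ∉ Set.range f := by
  rintro ⟨a, ha⟩
  have haD : a ∈ Dinf f := by
    rintro ⟨x, hx0, hxs⟩
    have hx0D : x 0 ∈ Dinf f := ha ▸ hx0
    exact hx0D ⟨fun i => x (i + 1), hxs 0, fun i => hxs (i + 1)⟩
  have haf : a ∈ f a := by rw [ha]; exact haD
  exact haD ⟨fun _ => a, haf, fun i => haf⟩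
end

section
/- For any function f : A → 𝒫(A) and any n > 0, the set 𝓓_n = {a ∈ A : there are no x_1,…,x_n ∈ A with x_1 ∈ f(a), x_{i+1} ∈ f(x_i) for 1 ≤ i < n, and a ∈ f(x_n)} is not in the range of f. -/
/-- `𝓓_n`: the set of `a` admitting no `f`-membership cycle
`x 1 ∈ f a`, `x (i+1) ∈ f (x i)` for `1 ≤ i < n`, and `a ∈ f (x n)`. -/
def Dn {A : Type*} (f : A → Set A) (n : ℕ) : Set A :=
  {a : A | ¬ ∃ x : ℕ → A, x 1 ∈ f a ∧
      (∀ i : ℕ, 1 ≤ i → i < n → x (i + 1) ∈ f (x i)) ∧ a ∈ f (x n)}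

theorem Dn_not_in_range {A : Type*} (f : A → Set A) (n : ℕ) (hn : 0 < n) :
    Dn f n ∉ Set.range f := by
  rintro ⟨c, hc⟩
  by_cases h : c ∈ Dn f n
  · -- then c ∈ f c, so constant cycle contradicts h
    have hcc : c ∈ f c := by rw [hc]; exact h
    exact h ⟨fun _ => c, hcc, fun _ _ _ => hcc, hcc⟩
  · -- c ∉ Dn f n = f c, so there's a cycle; rotate it to show x 1 ∉ Dn
    have h' : ∃ x : ℕ → A, x 1 ∈ f c ∧
        (∀ i : ℕ, 1 ≤ i → i < n → x (i + 1) ∈ f (x i)) ∧ c ∈ f (x n) := by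
      simpa [Dn] using h
    obtain ⟨x, hx1, hchain, hxn⟩ := h'
    have hx1D : x 1 ∈ Dn f n := by rw [← hc]; exact hx1
    apply hx1D
    refine ⟨fun i => if i = n then c else x (i + 1), ?_, ?_, ?_⟩
    · by_cases h1 : (1 : ℕ) = n
      · simp only [h1, if_pos rfl]
        rw [← h1] at hxn ⊢; exact hxn
      · simp only [if_neg h1]
        exact hchain 1 le_rfl (lt_of_le_of_ne hn h1)
    · intro i hi hin
      by_cases h2 : i + 1 = n
      · simp only [if_pos h2, if_neg (Nat.ne_of_lt hin)]
        rw [← h2] at hxn; exact hxn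
      · simp only [if_neg h2, if_neg (Nat.ne_of_lt hin)]
        exact hchain (i + 1) (le_trans hi (Nat.le_succ i)) (lt_of_le_of_ne hin h2)
    · simp only [if_pos rfl]; exact hx1
end
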